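/- For the symmetric group S_n acting on ℝ^n by permuting coordinates, with basic invariants the elementary symmetric polynomials p_a(x) = s_a(x_1,...,x_n) for a = 1,...,n, the scalar products of gradients satisfy ∇p_a(x)·∇p_b(x) = (n+1-min(a,b))·p_{a-1}(x)·p_{b-1}(x) − Σ_{i=max(1,a+b−n−1)}^{min(a,b)} (a+b−2i)·p_{i−1}(x)·p_{a+b−1−i}(x) for all a,b = 1,...,n and all x ∈ ℝ^n, where by convention p_0(x) = 1 and p_c(x) = 0 for c > n or c < 0. -/

import Mathlib

open MvPolynomial Finset

lemma telescope (s : ℕ) : ∀ m : ℕ, 2 * m ≤ s →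
    ∑ j ∈ range (m + 1), (s - 2 * j) * s.choose j = (s - m) * s.choose m := by
  intro m
  induction m with
  | zero => simp
  | succ m ih =>
    intro h
    rw [Finset.sum_range_succ, ih (by omega)]
    have hc := Nat.choose_succ_right_eq s m
    have h1 : (s - m) * s.choose m = (m + 1) * s.choose (m+1) := by
      rw [mul_comm (m+1), hc, mul_comm]
    rw [h1]
    have : (m + 1) + (s - 2 * (m+1)) = s - (m+1) := by omega
    rw [← add_mul, this]

lemma scalarId (n a b t : ℕ) (ha : 1 ≤ a) (han : a ≤ n) (hb : 1 ≤ b) (hbn : b ≤ n)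
    (ht : t < min a b) (htn : a + b - 2 - t ≤ n) :
    (n + 1 - min a b) * (a + b - 2 - 2 * t).choose (a - 1 - t)
      = (n - (a + b - 2 - t)) * (a + b - 2 - 2 * t).choose (a - 1 - t)
        + ∑ i ∈ Icc (t + 1) (min a b), (a + b - 2 * i) * (a + b - 2 - 2 * t).choose (i - 1 - t) := by
  set s := a + b - 2 - 2 * t with hs
  set M := min a b with hM
  have hMa : M ≤ a := Nat.min_le_left a b
  have hMb : M ≤ b := Nat.min_le_right a b
  have hMm : M = a ∨ M = b := by omega
  set m := M - 1 - t with hm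
  have hsum : ∑ i ∈ Icc (t + 1) M, (a + b - 2 * i) * s.choose (i - 1 - t)
      = (s - m) * s.choose m := by
    rw [← Finset.Ico_add_one_right_eq_Icc, Finset.sum_Ico_eq_sum_range]
    have hrange : M + 1 - (t + 1) = m + 1 := by omega
    rw [hrange]
    rw [← telescope s m (by omega)]
    apply Finset.sum_congr rfl
    intro j hj
    simp only [Finset.mem_range] at hj
    congr 1
    · omega
    · congr 1; omega
  rw [hsum]
  have hcs : s.choose m = s.choose (a - 1 - t) := by
    rcases hMm with h | h
    · rw [hm, h]
    · rw [hm, h]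
      have h1 : a - 1 - t ≤ s := by omega
      rw [← Nat.choose_symm h1]
      congr 1; omega
  rw [hcs, ← add_mul]
  congr 1
  omega

lemma pderiv_prod_X {n : ℕ} (j : Fin n) (A : Finset (Fin n)) :
    pderiv j (∏ i ∈ A, (X i : MvPolynomial (Fin n) ℝ))
      = if j ∈ A then ∏ i ∈ A.erase j, X i else 0 := by
  induction A using Finset.induction_on with
  | empty => simp
  | insert _ _ hA ih =>
    rename_i c A'
    rw [Finset.prod_insert hA, pderiv_mul, ih]
    by_cases hj : j = c
    · subst hj
      simp [hA, Finset.erase_insert hA]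
    · rw [pderiv_X_of_ne (Ne.symm hj)]
      by_cases hjA : j ∈ A'
      · rw [if_pos hjA, if_pos (Finset.mem_insert_of_mem hjA),
          Finset.erase_insert_of_ne (Ne.symm hj), Finset.prod_insert (by simp [Finset.mem_erase, hA])]
        ring
      · simp [hjA, hj, Ne.symm hj]

lemma eval_pderiv_esymm {n : ℕ} (x : Fin n → ℝ) (j : Fin n) (a : ℕ) (ha : 1 ≤ a) :
    eval x (pderiv j (esymm (Fin n) ℝ a))
      = ∑ A ∈ (Finset.powersetCard (a - 1) Finset.univ).filter (fun A => j ∉ A),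
          ∏ v ∈ A, x v := by
  rw [esymm, map_sum, map_sum]
  have h1 : ∀ A ∈ Finset.powersetCard a (Finset.univ : Finset (Fin n)),
      eval x (pderiv j (∏ i ∈ A, (X i : MvPolynomial (Fin n) ℝ)))
        = if j ∈ A then ∏ v ∈ A.erase j, x v else 0 := by
    intro A _
    rw [pderiv_prod_X]
    split_ifs with h <;> simp [eval_prod]
  rw [Finset.sum_congr rfl h1, ← Finset.sum_filter]
  apply Finset.sum_nbij' (i := fun A => A.erase j) (j := fun B => insert j B)
  · intro A hA
    simp only [Finset.mem_filter, Finset.mem_powersetCard] at hA ⊢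
    refine ⟨⟨Finset.subset_univ _, ?_⟩, Finset.notMem_erase _ _⟩
    rw [Finset.card_erase_of_mem hA.2, hA.1.2]
  · intro B hB
    simp only [Finset.mem_filter, Finset.mem_powersetCard] at hB ⊢
    refine ⟨⟨Finset.subset_univ _, ?_⟩, Finset.mem_insert_self _ _⟩
    rw [Finset.card_insert_of_notMem hB.2, hB.1.2]
    omega
  · intro A hA
    simp only [Finset.mem_filter] at hA
    exact Finset.insert_erase hA.2
  · intro B hB
    simp only [Finset.mem_filter, Finset.mem_powersetCard] at hB
    exact Finset.erase_insert hB.2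
  · intro A hA
    rfl

lemma key_regroup {n : ℕ} (x : Fin n → ℝ) (p q : ℕ) (w : ℕ → ℝ) :
    ∑ A ∈ Finset.powersetCard p (Finset.univ : Finset (Fin n)),
      ∑ B ∈ Finset.powersetCard q Finset.univ,
        w ((A ∩ B).card) * (∏ v ∈ A, x v) * (∏ v ∈ B, x v)
      = ∑ t ∈ Finset.range (min p q + 1),
          ∑ J ∈ Finset.powersetCard t (Finset.univ : Finset (Fin n)),
            (((p + q - 2*t).choose (p - t) : ℕ) : ℝ) * w t * (∏ v ∈ J, x v)^2 *
              ∑ S ∈ Finset.powersetCard (p + q - 2*t) (Finset.univ \ J), ∏ v ∈ S, x v := by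
  -- step 1: rewrite RHS inner sums introducing a sum over P ⊆ S
  have hRHS : ∀ t ∈ Finset.range (min p q + 1),
      ∀ J ∈ Finset.powersetCard t (Finset.univ : Finset (Fin n)),
      (((p + q - 2*t).choose (p - t) : ℕ) : ℝ) * w t * (∏ v ∈ J, x v)^2 *
              ∑ S ∈ Finset.powersetCard (p + q - 2*t) (Finset.univ \ J), ∏ v ∈ S, x v
        = ∑ S ∈ Finset.powersetCard (p + q - 2*t) (Finset.univ \ J),
            ∑ P ∈ S.powersetCard (p - t),
              w t * (∏ v ∈ J, x v)^2 * ((∏ v ∈ P, x v) * (∏ v ∈ S \ P, x v)) := by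
    intro t _ J _
    rw [Finset.mul_sum]
    apply Finset.sum_congr rfl
    intro S hS
    simp only [Finset.mem_powersetCard] at hS
    have hP : ∀ P ∈ S.powersetCard (p - t),
        w t * (∏ v ∈ J, x v)^2 * ((∏ v ∈ P, x v) * (∏ v ∈ S \ P, x v))
          = w t * (∏ v ∈ J, x v)^2 * (∏ v ∈ S, x v) := by
      intro P hP
      simp only [Finset.mem_powersetCard] at hP
      rw [mul_comm (∏ v ∈ P, x v), Finset.prod_sdiff hP.1]
    rw [Finset.sum_congr rfl hP, Finset.sum_const, Finset.card_powersetCard, hS.2, nsmul_eq_mul]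
    ring
  rw [Finset.sum_congr rfl (fun t ht => Finset.sum_congr rfl (hRHS t ht))]
  -- step 2: flatten both sides into sigma sums
  rw [Finset.sum_sigma', Finset.sum_sigma', Finset.sum_sigma', Finset.sum_sigma']
  -- step 3: bijection
  apply Finset.sum_nbij'
    (i := fun z => (⟨⟨⟨(z.1 ∩ z.2).card, z.1 ∩ z.2⟩, (z.1 ∪ z.2) \ (z.1 ∩ z.2)⟩, z.1 \ z.2⟩ :
      Σ _ : Σ _ : Σ _ : ℕ, Finset (Fin n), Finset (Fin n), Finset (Fin n)))
    (j := fun y => (⟨y.1.1.2 ∪ y.2, y.1.1.2 ∪ (y.1.2 \ y.2)⟩ :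
      Σ _ : Finset (Fin n), Finset (Fin n)))
  · -- hi : membership
    rintro ⟨A, B⟩ hz
    simp only [Finset.mem_sigma, Finset.mem_powersetCard, Finset.mem_range] at hz ⊢
    obtain ⟨⟨-, hA⟩, ⟨-, hB⟩⟩ := hz
    have h1 : (A ∩ B).card ≤ A.card := Finset.card_le_card Finset.inter_subset_left
    have h2 : (A ∩ B).card ≤ B.card := Finset.card_le_card Finset.inter_subset_right
    have h3 : (A ∪ B).card + (A ∩ B).card = A.card + B.card :=
      Finset.card_union_add_card_inter A B
    have h4 : ((A ∪ B) \ (A ∩ B)).card = (A ∪ B).card - (A ∩ B).card :=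
      Finset.card_sdiff_of_subset (Finset.inter_subset_union)
    have h5 : (A \ B).card + (A ∩ B).card = A.card := Finset.card_sdiff_add_card_inter A B
    refine ⟨⟨⟨by omega, Finset.subset_univ _, trivial⟩, ?_, ?_⟩, ?_, by omega⟩
    · exact Finset.sdiff_subset_sdiff (Finset.subset_univ _) (le_refl _)
    · rw [h4]; omega
    · intro v hv
      simp only [Finset.mem_sdiff, Finset.mem_inter, Finset.mem_union] at hv ⊢
      tauto
  · -- hj : membership
    rintro ⟨⟨⟨t, J⟩, S⟩, P⟩ hy
    simp only [Finset.mem_sigma, Finset.mem_powersetCard, Finset.mem_range] at hy ⊢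
    obtain ⟨⟨⟨ht, ⟨-, hJ⟩⟩, hS⟩, hP⟩ := hy
    have hPS : P ⊆ S := hP.1
    have hSJ : ∀ v ∈ S, v ∉ J := by
      intro v hv
      have := hS.1 hv
      simp only [Finset.mem_sdiff] at this
      exact this.2
    have hdJP : Disjoint J P := by
      rw [Finset.disjoint_right]
      exact fun v hv => hSJ v (hPS hv)
    have hdJS' : Disjoint J (S \ P) := by
      rw [Finset.disjoint_right]
      exact fun v hv => hSJ v (Finset.mem_sdiff.mp hv).1
    constructor
    · refine ⟨Finset.subset_univ _, ?_⟩
      rw [Finset.card_union_of_disjoint hdJP, hJ, hP.2]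
      omega
    · refine ⟨Finset.subset_univ _, ?_⟩
      rw [Finset.card_union_of_disjoint hdJS', hJ, Finset.card_sdiff_of_subset hPS, hS.2, hP.2]
      omega
  · -- left inverse
    rintro ⟨A, B⟩ hz
    have e1 : (A ∩ B) ∪ (A \ B) = A := by
      ext v; simp only [Finset.mem_union, Finset.mem_inter, Finset.mem_sdiff]; tauto
    have e2 : (A ∩ B) ∪ (((A ∪ B) \ (A ∩ B)) \ (A \ B)) = B := by
      ext v
      simp only [Finset.mem_union, Finset.mem_inter, Finset.mem_sdiff]
      tauto
    show (⟨(A ∩ B) ∪ (A \ B), (A ∩ B) ∪ (((A ∪ B) \ (A ∩ B)) \ (A \ B))⟩ :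
      Σ _ : Finset (Fin n), Finset (Fin n)) = ⟨A, B⟩
    rw [e1, e2]
  · -- right inverse
    rintro ⟨⟨⟨t, J⟩, S⟩, P⟩ hy
    simp only [Finset.mem_sigma, Finset.mem_powersetCard, Finset.mem_range] at hy
    obtain ⟨⟨⟨ht, ⟨-, hJ⟩⟩, hS⟩, hP⟩ := hy
    have hPS : ∀ v, v ∈ P → v ∈ S := fun v hv => hP.1 hv
    have hSJ : ∀ v, v ∈ S → v ∉ J := by
      intro v hv
      have := hS.1 hv
      simp only [Finset.mem_sdiff] at this
      exact this.2
    have e1 : (J ∪ P) ∩ (J ∪ (S \ P)) = J := by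
      ext v
      have h1 := hPS v; have h2 := hSJ v
      simp only [Finset.mem_inter, Finset.mem_union, Finset.mem_sdiff]
      tauto
    have e2 : ((J ∪ P) ∪ (J ∪ (S \ P))) \ ((J ∪ P) ∩ (J ∪ (S \ P))) = S := by
      ext v
      have h1 := hPS v; have h2 := hSJ v
      simp only [Finset.mem_inter, Finset.mem_union, Finset.mem_sdiff]
      tauto
    have e3 : (J ∪ P) \ (J ∪ (S \ P)) = P := by
      ext v
      have h1 := hPS v; have h2 := hSJ v
      simp only [Finset.mem_union, Finset.mem_sdiff]
      tauto
    show (⟨⟨⟨((J ∪ P) ∩ (J ∪ (S \ P))).card, (J ∪ P) ∩ (J ∪ (S \ P))⟩,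
        ((J ∪ P) ∪ (J ∪ (S \ P))) \ ((J ∪ P) ∩ (J ∪ (S \ P)))⟩,
        (J ∪ P) \ (J ∪ (S \ P))⟩ :
      Σ _ : Σ _ : Σ _ : ℕ, Finset (Fin n), Finset (Fin n), Finset (Fin n)) = ⟨⟨⟨t, J⟩, S⟩, P⟩
    rw [e3, e2, e1, hJ]
  · -- values
    rintro ⟨A, B⟩ hz
    have eS : ((A ∪ B) \ (A ∩ B)) \ (A \ B) = B \ A := by
      ext v
      simp only [Finset.mem_union, Finset.mem_inter, Finset.mem_sdiff]
      tauto
    show w ((A ∩ B).card) * (∏ v ∈ A, x v) * (∏ v ∈ B, x v)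
      = w ((A ∩ B).card) * (∏ v ∈ A ∩ B, x v)^2 *
          ((∏ v ∈ A \ B, x v) * (∏ v ∈ ((A ∪ B) \ (A ∩ B)) \ (A \ B), x v))
    rw [eS]
    have eA : (∏ v ∈ A ∩ B, x v) * (∏ v ∈ A \ B, x v) = ∏ v ∈ A, x v := by
      rw [← Finset.prod_union (Finset.disjoint_right.mpr
        (fun v hv => by simp only [Finset.mem_inter, Finset.mem_sdiff] at hv ⊢; tauto))]
      congr 1
      ext v; simp only [Finset.mem_union, Finset.mem_inter, Finset.mem_sdiff]; tauto
    have eB : (∏ v ∈ A ∩ B, x v) * (∏ v ∈ B \ A, x v) = ∏ v ∈ B, x v := by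
      rw [← Finset.prod_union (Finset.disjoint_right.mpr
        (fun v hv => by simp only [Finset.mem_inter, Finset.mem_sdiff] at hv ⊢; tauto))]
      congr 1
      ext v; simp only [Finset.mem_union, Finset.mem_inter, Finset.mem_sdiff]; tauto
    rw [← eA, ← eB]
    ring

section helpers
variable {n : ℕ} (x : Fin n → ℝ)

lemma eval_esymm' (k : ℕ) :
    eval x (esymm (Fin n) ℝ k)
      = ∑ A ∈ Finset.powersetCard k (Finset.univ : Finset (Fin n)), ∏ v ∈ A, x v := by
  simp [esymm, eval_prod]

lemma sum_swap_tri (L M : ℕ) (F : ℕ → ℕ → ℝ) :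
    ∑ i ∈ Finset.Icc L M, ∑ t ∈ Finset.range i, F i t
      = ∑ t ∈ Finset.range M, ∑ i ∈ (Finset.Icc L M).filter (fun i => t < i), F i t := by
  have h1 : ∀ i ∈ Finset.Icc L M,
      ∑ t ∈ Finset.range i, F i t = ∑ t ∈ Finset.range M, if t < i then F i t else 0 := by
    intro i hi
    simp only [Finset.mem_Icc] at hi
    rw [← Finset.sum_filter]
    congr 1
    ext t
    simp only [Finset.mem_filter, Finset.mem_range]
    omega
  rw [Finset.sum_congr rfl h1, Finset.sum_comm]
  exact Finset.sum_congr rfl fun t _ => (Finset.sum_filter _ _).symm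

end helpers

/-- Generating formula for the `P`-matrix entries of the symmetric group `Sₙ` with the
elementary symmetric polynomials as basic invariants. -/
theorem Sn_P_matrix_generating_formula (n a b : ℕ) (ha : 1 ≤ a) (han : a ≤ n)
    (hb : 1 ≤ b) (hbn : b ≤ n) (x : Fin n → ℝ) :
    (∑ j : Fin n,
        eval x (pderiv j (esymm (Fin n) ℝ a)) * eval x (pderiv j (esymm (Fin n) ℝ b)))
      = ((n + 1 - min a b : ℕ) : ℝ) * eval x (esymm (Fin n) ℝ (a - 1)) *
          eval x (esymm (Fin n) ℝ (b - 1))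
        - ∑ i ∈ Finset.Icc (max 1 (a + b - n - 1)) (min a b),
            ((a + b - 2 * i : ℕ) : ℝ) * eval x (esymm (Fin n) ℝ (i - 1)) *
              eval x (esymm (Fin n) ℝ (a + b - 1 - i)) := by
  classical
  -- Step A : the gradient sum as a weighted double sum over pairs of subsets
  have hL : (∑ j : Fin n,
        eval x (pderiv j (esymm (Fin n) ℝ a)) * eval x (pderiv j (esymm (Fin n) ℝ b)))
      = ∑ A ∈ Finset.powersetCard (a-1) (Finset.univ : Finset (Fin n)),
          ∑ B ∈ Finset.powersetCard (b-1) Finset.univ,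
            ((n - (a + b - 2 - (A ∩ B).card) : ℕ) : ℝ) *
              (∏ v ∈ A, x v) * (∏ v ∈ B, x v) := by
    have hd : ∀ (j : Fin n),
        eval x (pderiv j (esymm (Fin n) ℝ a)) * eval x (pderiv j (esymm (Fin n) ℝ b))
          = ∑ A ∈ Finset.powersetCard (a-1) (Finset.univ : Finset (Fin n)),
              ∑ B ∈ Finset.powersetCard (b-1) Finset.univ,
                (if j ∈ A ∪ B then 0 else (∏ v ∈ A, x v) * (∏ v ∈ B, x v)) := by
      intro j
      rw [eval_pderiv_esymm x j a ha, eval_pderiv_esymm x j b hb, Finset.sum_mul_sum,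
        Finset.sum_filter]
      refine Finset.sum_congr rfl fun A _ => ?_
      by_cases hjA : j ∈ A
      · simp [hjA, Finset.mem_union]
      · rw [if_pos hjA, Finset.sum_filter]
        refine Finset.sum_congr rfl fun B _ => ?_
        by_cases hjB : j ∈ B <;> simp [hjA, hjB, Finset.mem_union]
    rw [Finset.sum_congr rfl (fun j _ => hd j), Finset.sum_comm]
    refine Finset.sum_congr rfl fun A hA => ?_
    rw [Finset.sum_comm]
    refine Finset.sum_congr rfl fun B hB => ?_
    rw [Finset.sum_ite, Finset.sum_const, Finset.sum_const, smul_zero, zero_add]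
    have hfn : Finset.univ.filter (fun j => ¬ j ∈ A ∪ B) = Finset.univ \ (A ∪ B) := by
      ext v; simp
    rw [hfn, Finset.card_sdiff_of_subset (Finset.subset_univ _), Finset.card_univ, Fintype.card_fin]
    simp only [Finset.mem_powersetCard] at hA hB
    have h3 := Finset.card_union_add_card_inter A B
    have h1 : (A ∩ B).card ≤ A.card := Finset.card_le_card Finset.inter_subset_left
    have hun : (A ∪ B).card ≤ n := by
      have := Finset.card_le_card (Finset.subset_univ (A ∪ B))
      simpa using this
    have he : n - (A ∪ B).card = n - (a + b - 2 - (A ∩ B).card) := by omega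
    rw [he, nsmul_eq_mul]
    ring
  rw [hL.trans (key_regroup x (a-1) (b-1) (fun t => ((n - (a + b - 2 - t) : ℕ) : ℝ)))]
  -- Step B : rewrite the products of elementary symmetric polynomials
  have hprod : ∀ p q : ℕ,
      eval x (esymm (Fin n) ℝ p) * eval x (esymm (Fin n) ℝ q)
        = ∑ t ∈ Finset.range (min p q + 1),
            ∑ J ∈ Finset.powersetCard t (Finset.univ : Finset (Fin n)),
              (((p + q - 2*t).choose (p - t) : ℕ) : ℝ) * (∏ v ∈ J, x v)^2 *
                ∑ S ∈ Finset.powersetCard (p + q - 2*t) (Finset.univ \ J), ∏ v ∈ S, x v := by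
    intro p q
    rw [eval_esymm', eval_esymm', Finset.sum_mul_sum]
    have h1 : ∀ A ∈ Finset.powersetCard p (Finset.univ : Finset (Fin n)),
        ∀ B ∈ Finset.powersetCard q (Finset.univ : Finset (Fin n)),
        (∏ v ∈ A, x v) * (∏ v ∈ B, x v)
          = (fun _ : ℕ => (1:ℝ)) ((A ∩ B).card) * (∏ v ∈ A, x v) * (∏ v ∈ B, x v) := by
      intro A _ B _; simp
    rw [Finset.sum_congr rfl
      (fun A hA => Finset.sum_congr rfl (fun B hB => h1 A hA B hB)),
      key_regroup x p q (fun _ => (1:ℝ))]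
    simp [mul_one]
  have emin : min (a-1) (b-1) + 1 = min a b := by omega
  have esum : (a-1) + (b-1) = a + b - 2 := by omega
  simp only [emin, esum]
  rw [mul_assoc, hprod (a-1) (b-1)]
  simp only [emin, esum]
  -- rewrite each term of the `i`-sum
  have hiterm : ∀ i ∈ Finset.Icc (max 1 (a + b - n - 1)) (min a b),
      ((a + b - 2 * i : ℕ) : ℝ) * eval x (esymm (Fin n) ℝ (i - 1)) *
          eval x (esymm (Fin n) ℝ (a + b - 1 - i))
        = ∑ t ∈ Finset.range i,
            ∑ J ∈ Finset.powersetCard t (Finset.univ : Finset (Fin n)),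
              ((a + b - 2 * i : ℕ) : ℝ) *
                ((((a + b - 2 - 2*t).choose (i - 1 - t) : ℕ) : ℝ) * (∏ v ∈ J, x v)^2 *
                  ∑ S ∈ Finset.powersetCard (a + b - 2 - 2*t) (Finset.univ \ J), ∏ v ∈ S, x v) := by
    intro i hi
    simp only [Finset.mem_Icc] at hi
    have hi1 : 1 ≤ i := le_trans (le_max_left _ _) hi.1
    have hi2 : i ≤ min a b := hi.2
    have e1 : min (i-1) (a+b-1-i) + 1 = i := by omega
    have e2 : (i-1) + (a+b-1-i) = a + b - 2 := by omega
    rw [mul_assoc, hprod (i-1) (a+b-1-i)]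
    simp only [e1, e2, Finset.mul_sum]
  rw [Finset.sum_congr rfl hiterm]
  rw [sum_swap_tri]
  simp only [Finset.mul_sum]
  rw [← Finset.sum_sub_distrib]
  refine Finset.sum_congr rfl fun t ht => ?_
  simp only [Finset.mem_range] at ht
  conv_rhs => rw [Finset.sum_comm]
  rw [← Finset.sum_sub_distrib]
  refine Finset.sum_congr rfl fun J hJ => ?_
  simp only [Finset.mem_powersetCard] at hJ
  by_cases htn : a + b - 2 - t ≤ n
  · have hfil : (Finset.Icc (max 1 (a + b - n - 1)) (min a b)).filter (fun i => t < i)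
        = Finset.Icc (t+1) (min a b) := by
      ext i
      simp only [Finset.mem_filter, Finset.mem_Icc]
      omega
    rw [hfil]
    have hnat := scalarId n a b t ha han hb hbn ht htn
    have hreal : ((n + 1 - min a b : ℕ) : ℝ) * (((a + b - 2 - 2*t).choose (a - 1 - t) : ℕ) : ℝ)
        = ((n - (a + b - 2 - t) : ℕ) : ℝ) * (((a + b - 2 - 2*t).choose (a - 1 - t) : ℕ) : ℝ)
          + ∑ i ∈ Finset.Icc (t+1) (min a b),
              ((a + b - 2 * i : ℕ) : ℝ) * (((a + b - 2 - 2*t).choose (i - 1 - t) : ℕ) : ℝ) := by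
      exact_mod_cast hnat
    conv_rhs => rw [Finset.sum_comm]
    rw [← Finset.sum_sub_distrib]
    refine Finset.sum_congr rfl fun S hS => ?_
    have hpull : ∀ i ∈ Finset.Icc (t+1) (min a b),
        ((a + b - 2 * i : ℕ) : ℝ) *
            ((((a + b - 2 - 2*t).choose (i - 1 - t) : ℕ) : ℝ) * (∏ v ∈ J, x v)^2 *
              ∏ v ∈ S, x v)
          = (((a + b - 2 * i : ℕ) : ℝ) * (((a + b - 2 - 2*t).choose (i - 1 - t) : ℕ) : ℝ)) *
              ((∏ v ∈ J, x v)^2 * ∏ v ∈ S, x v) := by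
      intro i _; ring
    rw [Finset.sum_congr rfl hpull, ← Finset.sum_mul]
    linear_combination (-((∏ v ∈ J, x v)^2 * ∏ v ∈ S, x v)) * hreal
  · have hE : (Finset.powersetCard (a + b - 2 - 2*t) (Finset.univ \ J) : Finset (Finset (Fin n)))
        = ∅ := by
      rw [Finset.powersetCard_eq_empty]
      rw [Finset.card_sdiff_of_subset (Finset.subset_univ _), Finset.card_univ, Fintype.card_fin, hJ.2]
      omega
    simp [hE]
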